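/- Let A be an AB3* abelian category with an injective cogenerator. Then A is also AB3 (cocomplete), and moreover AB4: coproducts of short exact sequences are exact. -/

import Mathlib

open CategoryTheory CategoryTheory.Limits

universe v u

namespace Paper

section Aux

variable {C : Type u} [Category.{v} C] [Abelian C]
variable {E : C}

lemma aux_coseparator (hinj : Injective E)
    (hcogen : ∀ X : C, (∀ f : X ⟶ E, f = 0) → IsZero X) : IsCoseparator E := by
  rw [Preadditive.isCoseparator_iff]
  intro X Y f hf
  have hz : IsZero (image f) := by
    apply hcogen
    intro g
    have hg : factorThruImage f ≫ g = 0 := by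
      rw [← Injective.comp_factorThru g (image.ι f), ← Category.assoc, image.fac]
      exact hf _
    exact (cancel_epi (factorThruImage f)).1 (by rw [hg, comp_zero])
  rw [← image.fac f, hz.eq_zero_of_src (image.ι f), comp_zero]

lemma aux_wellPowered (hE : IsCoseparator E) : WellPowered.{v} C := by
  constructor
  intro X
  apply small_of_injective.{v} (f := fun A : Subobject X => {f : X ⟶ E | A.arrow ≫ f = 0})
  intro A B hAB
  have key : ∀ (A B : Subobject X),
      ({f : X ⟶ E | A.arrow ≫ f = 0} : Set (X ⟶ E)) = {f | B.arrow ≫ f = 0} → A ≤ B := by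
    intro A B h
    have hπ : A.arrow ≫ cokernel.π B.arrow = 0 := by
      apply (Preadditive.isCoseparator_iff E).1 hE
      intro g
      have hmem : (cokernel.π B.arrow ≫ g) ∈ {f : X ⟶ E | B.arrow ≫ f = 0} := by
        simp [cokernel.condition_assoc]
      rw [← h] at hmem
      simpa using hmem
    exact Subobject.le_of_comm (Abelian.monoLift B.arrow A.arrow hπ)
      (Abelian.monoLift_comp _ _ _)
  exact le_antisymm (key A B hAB) (key B A hAB.symm)

end Aux

/-- an AB3* abelian category with an injective cogenerator is AB3
(cocomplete for set-indexed coproducts) and moreover AB4 (coproducts are exact). -/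
theorem statement14 (C : Type u) [Category.{v} C] [Abelian C] [HasProducts.{v} C]
    (E : C) (hinj : Injective E)
    (hcogen : ∀ X : C, (∀ f : X ⟶ E, f = 0) → IsZero X) :
    ∃ h : HasCoproducts.{v} C, @AB4 C _ h := by
  have hE : IsCoseparator E := aux_coseparator hinj hcogen
  have : WellPowered.{v} C := aux_wellPowered hE
  have : HasLimits C := has_limits_of_hasEqualizers_and_products
  have hcol : HasColimits C := hasColimits_of_hasLimits_of_isCoseparating hE
  have h : HasCoproducts.{v} C := fun α => inferInstance
  refine ⟨h, ?_⟩
  constructor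
  intro α
  -- colim over Discrete α preserves finite limits
  have hmono : (colim (J := Discrete α) (C := C)).PreservesMonomorphisms := by
    constructor
    intro X Y f hf
    rw [Preadditive.mono_iff_cancel_zero]
    intro T g hg
    apply (Preadditive.isCoseparator_iff E).1 hE
    intro q
    -- extend each component of q along f
    have hmonoapp : ∀ i : Discrete α, Mono (f.app i) := fun i => inferInstance
    let k : ∀ i : Discrete α, Y.obj i ⟶ E := fun i =>
      @Injective.factorThru _ _ _ _ _ hinj (colimit.ι X i ≫ q) (f.app i) (hmonoapp i)
    let K : colimit Y ⟶ E := colimit.desc Y ⟨E, Discrete.natTrans k⟩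
    have hfac : colim.map f ≫ K = q := by
      apply colimit.hom_ext
      intro i
      rw [colimit.ι_map_assoc, colimit.ι_desc]
      exact @Injective.comp_factorThru _ _ _ _ _ hinj (colimit.ι X i ≫ q) (f.app i) (hmonoapp i)
    rw [← hfac, ← Category.assoc, hg, zero_comp]
  have hph : (colim (J := Discrete α) (C := C)).PreservesHomology :=
    Functor.preservesHomology_of_preservesMonos_and_cokernels _
  have hker : ∀ {X Y : Discrete α ⥤ C} (f : X ⟶ Y),
      PreservesLimit (parallelPair f 0) (colim (J := Discrete α) (C := C)) :=
    fun f => hph.preservesKernels f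
  exact ⟨Functor.preservesFiniteLimits_of_preservesKernels _⟩

end Paper
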